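/- Lifting prunes to ground completeness: let Π₁,…,Πₙ be definite programs over the same signature and S a specification such that every atom of S is covered w.r.t. S by each Πᵢ individually. Consider derivations for the ground program in which at each step the ground rule instance used may be taken from any single (possibly different at each step) ground(Πᵢ). If from a ground query Q with all atoms in S every such derivation is finite, then some such derivation from Q is successful (ends in the empty query); hence all atoms of Q are in the least Herbrand model of ⋃ᵢ Πᵢ. -/

import Mathlib

/-- A rule (ground instance of a program clause): a head atom and a list of body atoms. -/
structure GroundRule (α : Type) where
  head : α
  body : List α

/-- The least Herbrand model of a (ground) definite program `P`: the least set of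
ground atoms closed under the immediate consequence operator. -/
inductive LHM {α : Type} (P : Set (GroundRule α)) : α → Prop where
  | intro (r : GroundRule α) (hr : r ∈ P) (hb : ∀ b ∈ r.body, LHM P b) : LHM P r.head

/-- A ground atom `A` is covered by program `P` w.r.t. specification `S`:
there is a ground rule instance with head `A` and all body atoms in `S`. -/
def Covered {α : Type} (P : Set (GroundRule α)) (S : Set α) (A : α) : Prop :=
  ∃ r ∈ P, r.head = A ∧ ∀ b ∈ r.body, b ∈ S

/-- `P` is recurrent w.r.t. the level mapping `lvl`: in every ground rule instance
the level of the head strictly exceeds the level of each body atom. -/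
def Recurrent {α : Type} (P : Set (GroundRule α)) (lvl : α → ℕ) : Prop :=
  ∀ r ∈ P, ∀ b ∈ r.body, lvl b < lvl r.head

/-- An infinite (ground) SLD-derivation for program `P`, with explicit selection:
at step `n` the query `q n = pre n ++ (rule n).head :: post n`, the selected atom
(at position `(pre n).length`) is resolved using rule `rule n`. -/
structure InfDeriv {α : Type} (P : Set (GroundRule α)) where
  q : ℕ → List α
  pre : ℕ → List α
  rule : ℕ → GroundRule α
  post : ℕ → List α
  mem : ∀ n, rule n ∈ P
  eq1 : ∀ n, q n = pre n ++ (rule n).head :: post n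
  eq2 : ∀ n, q (n + 1) = pre n ++ (rule n).body ++ post n

/-- An atom occurrence (traced through the derivation from step `n` by the index
function `g`) which is never selected. -/
def UnselectedThread {α : Type} {P : Set (GroundRule α)} (D : InfDeriv P)
    (n : ℕ) (g : ℕ → ℕ) : Prop :=
  ∀ k, g k < (D.q (n + k)).length ∧ g k ≠ (D.pre (n + k)).length ∧
    g (k + 1) = if g k < (D.pre (n + k)).length then g k
                else g k - 1 + (D.rule (n + k)).body.length

/-- A fair infinite derivation: no atom occurrence stays forever unselected. -/
def FairDeriv {α : Type} {P : Set (GroundRule α)} (D : InfDeriv P) : Prop :=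
  ¬ ∃ n g, UnselectedThread D n g

/-- One SLD-resolution step for the ground program `P`. -/
def Step {α : Type} (P : Set (GroundRule α)) (q q' : List α) : Prop :=
  ∃ (q₁ q₂ : List α) (r : GroundRule α),
    r ∈ P ∧ q = q₁ ++ r.head :: q₂ ∧ q' = q₁ ++ r.body ++ q₂

/-- One step of a cs-derivation for programs `Ps 0, …, Ps (n-1)`: at each step the
ground rule instance used is taken from a single (per-step chosen) program. -/
def CsStep {α : Type} {n : ℕ} (Ps : Fin n → Set (GroundRule α)) (q q' : List α) : Prop :=
  ∃ i, Step (Ps i) q q'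

/-- Ground core of completeness of csSLD-trees: if every atom of `S` is covered w.r.t. `S`
by each program `Ps i` individually, `Q` is a ground query with all atoms in `S`, and every
cs-derivation from `Q` is finite, then some cs-derivation from `Q` is successful (reaches
the empty query), and hence all atoms of `Q` are in the least Herbrand model of `⋃ i, Ps i`. -/
theorem cs_pruning_preserves_completeness {α : Type} (n : ℕ) (hn : 0 < n)
    (Ps : Fin n → Set (GroundRule α)) (S : Set α) (Q : List α)
    (hcov : ∀ i, ∀ A ∈ S, Covered (Ps i) S A)
    (hQ : ∀ a ∈ Q, a ∈ S)
    (hfin : ¬ ∃ f : ℕ → List α, f 0 = Q ∧ ∀ k, CsStep Ps (f k) (f (k + 1))) :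
    Relation.ReflTransGen (CsStep Ps) Q [] ∧ ∀ a ∈ Q, LHM (⋃ i, Ps i) a := by
  classical
  set i₀ : Fin n := ⟨0, hn⟩
  -- from any nonempty query in S we can take a step staying in S
  have hstep : ∀ l : List α, (∀ a ∈ l, a ∈ S) → l ≠ [] →
      ∃ l', CsStep Ps l l' ∧ ∀ a ∈ l', a ∈ S := by
    intro l hl hne
    cases l with
    | nil => exact absurd rfl hne
    | cons a t =>
      obtain ⟨r, hr, hhead, hbody⟩ := hcov i₀ a (hl a (List.mem_cons_self (a := a) (l := t)))
      refine ⟨r.body ++ t, ⟨i₀, [], t, r, hr, by simp [hhead], rfl⟩, ?_⟩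
      intro b hb
      rcases List.mem_append.mp hb with hb | hb
      · exact hbody b hb
      · exact hl b (List.mem_cons_of_mem _ hb)
  -- define the canonical derivation
  let g : ℕ → {l : List α // ∀ a ∈ l, a ∈ S} := fun k =>
    Nat.rec ⟨Q, hQ⟩ (fun _ p =>
      if h : p.1 = [] then p
      else ⟨(hstep p.1 p.2 h).choose, (hstep p.1 p.2 h).choose_spec.2⟩) k
  have hgsucc : ∀ k, (g k).1 ≠ [] → CsStep Ps (g k).1 (g (k+1)).1 := by
    intro k h
    show CsStep Ps (g k).1 (if h' : (g k).1 = [] then (g k) else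
      ⟨(hstep (g k).1 (g k).2 h').choose, (hstep (g k).1 (g k).2 h').choose_spec.2⟩).1
    rw [dif_neg h]
    exact (hstep (g k).1 (g k).2 h).choose_spec.1
  have hgnil : ∀ k, (g k).1 = [] → (g (k+1)).1 = [] := by
    intro k h
    show (if h' : (g k).1 = [] then (g k) else
      ⟨(hstep (g k).1 (g k).2 h').choose, (hstep (g k).1 (g k).2 h').choose_spec.2⟩).1 = []
    rw [dif_pos h]; exact h
  -- some g k is empty
  have hterm : ∃ k, (g k).1 = [] := by
    by_contra hc
    push_neg at hc
    exact hfin ⟨fun k => (g k).1, rfl, fun k => hgsucc k (hc k)⟩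
  obtain ⟨k, hk⟩ := hterm
  have hrt : ∀ m, Relation.ReflTransGen (CsStep Ps) Q (g m).1 := by
    intro m
    induction m with
    | zero => exact Relation.ReflTransGen.refl
    | succ m ih =>
      by_cases h : (g m).1 = []
      · rw [hgnil m h, ← h] at *; exact ih
      · exact ih.tail (hgsucc m h)
  have hQnil : Relation.ReflTransGen (CsStep Ps) Q [] := hk ▸ hrt k
  refine ⟨hQnil, ?_⟩
  -- LHM part
  have key : ∀ q, Relation.ReflTransGen (CsStep Ps) q [] →
      ∀ a ∈ q, LHM (⋃ i, Ps i) a := by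
    intro q hq
    induction hq using Relation.ReflTransGen.head_induction_on with
    | refl => intro a ha; simp at ha
    | head hstep' _ ih =>
      rename_i x y _
      obtain ⟨i, q₁, q₂, r, hr, hx, hy⟩ := hstep'
      intro a ha
      rw [hx] at ha
      rcases List.mem_append.mp ha with ha | ha
      · exact ih a (by rw [hy]; simp [ha])
      · rcases List.mem_cons.mp ha with ha | ha
        · subst ha
          exact LHM.intro r (Set.mem_iUnion.mpr ⟨i, hr⟩)
            (fun b hb => ih b (by rw [hy]; simp [hb]))
        · exact ih a (by rw [hy]; simp [ha])
  exact key Q hQnil
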